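/- Theta function product formula: let m be a positive integer and p an integer. For all real t with 0 < t < 1 and real z > 0, θ(t,z) · θ_{p,m}(t,z) = ∑_{q} ( ∑_{n∈ℤ} t^{α^m_{p,q}(n)} ) · θ_{q,m+2}(t,z), where the outer sum runs over integers q with 0 ≤ q < 2(m+2) and q ≡ p (mod 2), and all series converge absolutely. -/
import Mathlib


open scoped BigOperators

/-- `θ(t,z) = ∑_{k ∈ ℤ} t^(k²/2) z^k` for real `t ∈ (0,1)`, `z > 0`. -/
noncomputable def theta (t z : ℝ) : ℝ :=
  ∑' k : ℤ, t ^ ((k : ℝ) ^ 2 / 2) * z ^ (k : ℤ)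

/-- `θ_{n,m}(t,z) = ∑_{k ∈ n/(2m) + ℤ} t^(m k²) z^(m k)`, parametrized by `k = n/(2m) + j`. -/
noncomputable def thetaNM (n : ℤ) (m : ℕ) (t z : ℝ) : ℝ :=
  ∑' j : ℤ, t ^ ((m : ℝ) * ((n : ℝ) / (2 * (m : ℝ)) + (j : ℝ)) ^ 2) *
    z ^ ((m : ℝ) * ((n : ℝ) / (2 * (m : ℝ)) + (j : ℝ)))

/-- `α^m_{p,q}(n) = (2m(m+2)n − (m+2)p + mq)² / (8m(m+2))`. -/
noncomputable def alphaPQ (m : ℝ) (p q n : ℤ) : ℝ :=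
  (2 * m * (m + 2) * (n : ℝ) - (m + 2) * (p : ℝ) + m * (q : ℝ)) ^ 2 / (8 * m * (m + 2))

open Filter Real

lemma summable_exp_quad_nat (a b : ℝ) (ha : a < 0) :
    Summable (fun n : ℕ => Real.exp (a * (n : ℝ) ^ 2 + b * n)) := by
  apply summable_of_ratio_test_tendsto_lt_one (l := 0) one_pos
    (Eventually.of_forall fun n => (Real.exp_pos _).ne')
  have key : ∀ n : ℕ, ‖Real.exp (a * ((n:ℝ)+1) ^ 2 + b * ((n:ℝ)+1))‖ /
      ‖Real.exp (a * (n:ℝ) ^ 2 + b * n)‖ = Real.exp ((2*a) * n + (a + b)) := by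
    intro n
    rw [Real.norm_of_nonneg (Real.exp_pos _).le, Real.norm_of_nonneg (Real.exp_pos _).le,
      ← Real.exp_sub]
    congr 1; ring
  have h1 : Tendsto (fun n : ℕ => Real.exp ((2*a) * n + (a + b))) atTop (nhds 0) := by
    apply Real.tendsto_exp_atBot.comp
    apply tendsto_atBot_add_const_right
    exact (Tendsto.const_mul_atTop_of_neg (by linarith) tendsto_natCast_atTop_atTop)
  apply h1.congr fun n => ?_
  rw [← key n]; push_cast; norm_num

lemma summable_exp_quad (a b : ℝ) (ha : a < 0) :
    Summable (fun k : ℤ => Real.exp (a * (k : ℝ) ^ 2 + b * k)) := by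
  apply Summable.of_nat_of_neg_add_one
  · exact (summable_exp_quad_nat a b ha).congr fun n => by norm_num
  · apply (((summable_exp_quad_nat a (2*a - b) ha)).mul_right (Real.exp (a - b))).congr
    intro n
    rw [← Real.exp_add]
    congr 1
    push_cast
    ring

lemma summable_rpow_quad {t z : ℝ} (ht0 : 0 < t) (ht1 : t < 1) (hz : 0 < z)
    (A B C D E : ℝ) (hA : 0 < A) :
    Summable (fun k : ℤ => t ^ (A * (k:ℝ) ^ 2 + B * k + C) * z ^ (D * (k:ℝ) + E)) := by
  have hlt : Real.log t < 0 := Real.log_neg ht0 ht1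
  have h := ((summable_exp_quad (A * Real.log t) (B * Real.log t + D * Real.log z)
    (mul_neg_of_pos_of_neg hA hlt)).mul_right
    (Real.exp (C * Real.log t + E * Real.log z)))
  apply h.congr fun k => ?_
  rw [Real.rpow_def_of_pos ht0, Real.rpow_def_of_pos hz, ← Real.exp_add, ← Real.exp_add]
  congr 1
  ring

lemma summable_theta_term {t z : ℝ} (ht0 : 0 < t) (ht1 : t < 1) (hz : 0 < z)
    {M : ℝ} (hM : 0 < M) (c : ℝ) :
    Summable (fun j : ℤ => t ^ (M * (c / (2 * M) + (j:ℝ)) ^ 2) *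
      z ^ (M * (c / (2 * M) + (j:ℝ)))) := by
  have hM0 : M ≠ 0 := ne_of_gt hM
  apply (summable_rpow_quad ht0 ht1 hz M c (c ^ 2 / (4 * M)) M (c / 2) hM).congr fun j => ?_
  rw [show M * (j:ℝ) ^ 2 + c * j + c ^ 2 / (4 * M) = M * (c / (2 * M) + (j:ℝ)) ^ 2 by
      field_simp; ring,
    show M * (j:ℝ) + c / 2 = M * (c / (2 * M) + (j:ℝ)) by field_simp; ring]

set_option maxHeartbeats 2000000 in
/-- Theta function product formula:
`θ(t,z) · θ_{p,m}(t,z) = ∑_{0 ≤ q < 2(m+2), q ≡ p [2]} (∑_{n ∈ ℤ} t^(α^m_{p,q}(n))) · θ_{q,m+2}(t,z)`,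
all the series involved converging absolutely. -/
theorem theta_product_formula (m : ℕ) (hm : 1 ≤ m) (p : ℤ) (t z : ℝ)
    (ht0 : 0 < t) (ht1 : t < 1) (hz : 0 < z) :
    Summable (fun k : ℤ => t ^ ((k : ℝ) ^ 2 / 2) * z ^ (k : ℤ)) ∧
    Summable (fun j : ℤ => t ^ ((m : ℝ) * ((p : ℝ) / (2 * (m : ℝ)) + (j : ℝ)) ^ 2) *
      z ^ ((m : ℝ) * ((p : ℝ) / (2 * (m : ℝ)) + (j : ℝ)))) ∧
    (∀ q : ℤ, Summable (fun n : ℤ => t ^ alphaPQ (m : ℝ) p q n)) ∧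
    (∀ q : ℤ, Summable (fun j : ℤ =>
      t ^ (((m : ℝ) + 2) * ((q : ℝ) / (2 * ((m : ℝ) + 2)) + (j : ℝ)) ^ 2) *
      z ^ (((m : ℝ) + 2) * ((q : ℝ) / (2 * ((m : ℝ) + 2)) + (j : ℝ))))) ∧
    theta t z * thetaNM p m t z =
      ∑ q ∈ (Finset.Ico (0 : ℤ) (2 * ((m : ℤ) + 2))).filter (fun q => q % 2 = p % 2),
        (∑' n : ℤ, t ^ alphaPQ (m : ℝ) p q n) * thetaNM q (m + 2) t z := by
  have hmR : (0:ℝ) < (m:ℝ) := by exact_mod_cast Nat.pos_of_ne_zero (by omega)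
  have hm0 : (m:ℝ) ≠ 0 := ne_of_gt hmR
  have hm2R : (0:ℝ) < (m:ℝ) + 2 := by linarith
  have hm20 : (m:ℝ) + 2 ≠ 0 := ne_of_gt hm2R
  -- summability statements
  have S1 : Summable (fun k : ℤ => t ^ ((k : ℝ) ^ 2 / 2) * z ^ (k : ℤ)) := by
    apply (summable_rpow_quad ht0 ht1 hz (1/2) 0 0 1 0 (by norm_num)).congr fun k => ?_
    rw [show (1/2:ℝ) * (k:ℝ)^2 + 0 * k + 0 = (k:ℝ)^2/2 by ring,
      show (1:ℝ) * (k:ℝ) + 0 = ((k:ℤ):ℝ) by norm_num, Real.rpow_intCast]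
  have S2 := summable_theta_term ht0 ht1 hz hmR (p:ℝ)
  have S3 : ∀ q : ℤ, Summable (fun n : ℤ => t ^ alphaPQ (m : ℝ) p q n) := by
    intro q
    apply (summable_rpow_quad ht0 ht1 hz ((m:ℝ)*((m:ℝ)+2)/2)
      ((-((m:ℝ)+2) * p + (m:ℝ) * q)/2)
      ((-((m:ℝ)+2) * p + (m:ℝ) * q)^2/(8*(m:ℝ)*((m:ℝ)+2))) 0 0 (by positivity)).congr
      fun n => ?_
    rw [show (0:ℝ) * (n:ℝ) + 0 = 0 by ring, Real.rpow_zero, mul_one]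
    congr 1
    simp only [alphaPQ]
    field_simp
    ring
  have S4 : ∀ q : ℤ, Summable (fun j : ℤ =>
      t ^ (((m : ℝ) + 2) * ((q : ℝ) / (2 * ((m : ℝ) + 2)) + (j : ℝ)) ^ 2) *
      z ^ (((m : ℝ) + 2) * ((q : ℝ) / (2 * ((m : ℝ) + 2)) + (j : ℝ)))) :=
    fun q => summable_theta_term ht0 ht1 hz hm2R (q:ℝ)
  refine ⟨S1, S2, S3, S4, ?_⟩
  -- norm summability
  have hS1n : Summable (fun k : ℤ => ‖t ^ ((k : ℝ) ^ 2 / 2) * z ^ (k : ℤ)‖) :=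
    S1.congr fun k => (Real.norm_of_nonneg (by positivity)).symm
  have hS2n : Summable (fun j : ℤ => ‖t ^ ((m : ℝ) * ((p : ℝ) / (2 * (m : ℝ)) + (j : ℝ)) ^ 2) *
      z ^ ((m : ℝ) * ((p : ℝ) / (2 * (m : ℝ)) + (j : ℝ)))‖) :=
    S2.congr fun j => (Real.norm_of_nonneg (by positivity)).symm
  have hS3n : ∀ q : ℤ, Summable (fun n : ℤ => ‖t ^ alphaPQ (m : ℝ) p q n‖) :=
    fun q => (S3 q).congr fun n => (Real.norm_of_nonneg (by positivity)).symm
  have hS4n : ∀ q : ℤ, Summable (fun j : ℤ =>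
      ‖t ^ (((m : ℝ) + 2) * ((q : ℝ) / (2 * ((m : ℝ) + 2)) + (j : ℝ)) ^ 2) *
      z ^ (((m : ℝ) + 2) * ((q : ℝ) / (2 * ((m : ℝ) + 2)) + (j : ℝ)))‖) :=
    fun q => (S4 q).congr fun j => (Real.norm_of_nonneg (by positivity)).symm
  -- the combined double-sum term
  set T : ℤ × ℤ → ℝ := fun x => (t ^ ((x.1 : ℝ) ^ 2 / 2) * z ^ (x.1 : ℤ)) *
    (t ^ ((m : ℝ) * ((p : ℝ) / (2 * (m : ℝ)) + (x.2 : ℝ)) ^ 2) *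
      z ^ ((m : ℝ) * ((p : ℝ) / (2 * (m : ℝ)) + (x.2 : ℝ)))) with hT
  set c : ℤ × ℤ → ℤ := fun x => (2 * x.1 + p + 2 * (m:ℤ) * x.2) % (2 * ((m:ℤ) + 2)) with hc
  have hTsum : Summable T := summable_mul_of_summable_norm hS1n hS2n
  have hL0 : (0:ℤ) < 2 * ((m:ℤ) + 2) := by positivity
  have step1 : theta t z * thetaNM p m t z = ∑' x : ℤ × ℤ, T x :=
    tsum_mul_tsum_of_summable_norm hS1n hS2n
  have hth2 : ∀ q : ℤ, thetaNM q (m + 2) t z =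
      ∑' j : ℤ, (t ^ (((m : ℝ) + 2) * ((q : ℝ) / (2 * ((m : ℝ) + 2)) + (j : ℝ)) ^ 2) *
        z ^ (((m : ℝ) + 2) * ((q : ℝ) / (2 * ((m : ℝ) + 2)) + (j : ℝ)))) := by
    intro q
    unfold thetaNM
    push_cast
    rfl
  have hcmem : ∀ x : ℤ × ℤ,
      c x ∈ (Finset.Ico (0 : ℤ) (2 * ((m : ℤ) + 2))).filter (fun q => q % 2 = p % 2) := by
    intro x
    simp only [Finset.mem_filter, Finset.mem_Ico]
    refine ⟨⟨Int.emod_nonneg _ hL0.ne', Int.emod_lt_of_pos _ hL0⟩, ?_⟩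
    have hdvd : (2:ℤ) ∣ 2 * ((m:ℤ) + 2) := ⟨(m:ℤ) + 2, rfl⟩
    simp only [hc]
    rw [Int.emod_emod_of_dvd _ hdvd,
      show 2 * x.1 + p + 2 * (m:ℤ) * x.2 = p + 2 * (x.1 + (m:ℤ) * x.2) by ring,
      Int.add_mul_emod_self_left]
  have hind : ∀ q : ℤ, Summable (fun x : ℤ × ℤ => if c x = q then T x else 0) := by
    intro q
    apply (hTsum.indicator {x | c x = q}).congr fun x => ?_
    simp [Set.indicator_apply, Set.mem_setOf_eq]
  have stepA : ∑' x : ℤ × ℤ, T x =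
      ∑ q ∈ (Finset.Ico (0 : ℤ) (2 * ((m : ℤ) + 2))).filter (fun q => q % 2 = p % 2),
        ∑' x : ℤ × ℤ, (if c x = q then T x else 0) := by
    rw [← Summable.tsum_finsetSum fun q _ => hind q]
    apply tsum_congr
    intro x
    rw [Finset.sum_ite_eq _ (c x) fun _ => T x, if_pos (hcmem x)]
  rw [step1, stepA]
  apply Finset.sum_congr rfl
  intro q hq
  simp only [Finset.mem_filter, Finset.mem_Ico] at hq
  obtain ⟨⟨hq0, hqL⟩, hqp⟩ := hq
  obtain ⟨d, hd⟩ : ∃ d : ℤ, q = p + 2 * d := ⟨(q - p) / 2, by omega⟩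
  set φ : ℤ × ℤ → ℤ × ℤ := fun y => (d + 2 * y.2 + (m:ℤ) * y.1, y.2 - y.1) with hφ
  have hinj : Function.Injective φ := by
    rintro ⟨a1, a2⟩ ⟨b1, b2⟩ h
    rw [Prod.ext_iff] at h
    obtain ⟨h1, h2⟩ := h
    simp only [hφ] at h1 h2
    have e1 : ((m:ℤ) + 2) * a1 = ((m:ℤ) + 2) * b1 := by linear_combination h1 - 2 * h2
    have e2 : a1 = b1 := mul_left_cancel₀ (by positivity) e1
    have e3 : a2 = b2 := by omega
    rw [Prod.ext_iff]
    exact ⟨e2, e3⟩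
  have hsupp : Function.support (fun x => if c x = q then T x else 0) ⊆ Set.range φ := by
    intro x hx
    have hcx : c x = q := by
      by_contra hne
      rw [Function.mem_support, if_neg hne] at hx
      exact hx rfl
    set a : ℤ := 2 * x.1 + p + 2 * (m:ℤ) * x.2 with ha
    have hdm : (2 * ((m:ℤ) + 2)) * (a / (2 * ((m:ℤ) + 2))) + q = a := by
      rw [← hcx]
      exact Int.mul_ediv_add_emod a _
    set j' : ℤ := a / (2 * ((m:ℤ) + 2)) with hj'
    refine ⟨(j' - x.2, j'), ?_⟩
    have h2k : 2 * (d + 2 * j' + (m:ℤ) * (j' - x.2)) = 2 * x.1 := by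
      linear_combination hdm - hd + ha
    have hk : d + 2 * j' + (m:ℤ) * (j' - x.2) = x.1 := by linarith
    rw [Prod.ext_iff]
    exact ⟨hk, by ring⟩
  have hval : ∀ y : ℤ × ℤ, (if c (φ y) = q then T (φ y) else 0) =
      (t ^ alphaPQ (m : ℝ) p q y.1) *
      (t ^ (((m : ℝ) + 2) * ((q : ℝ) / (2 * ((m : ℝ) + 2)) + (y.2 : ℝ)) ^ 2) *
        z ^ (((m : ℝ) + 2) * ((q : ℝ) / (2 * ((m : ℝ) + 2)) + (y.2 : ℝ)))) := by
    rintro ⟨n, j'⟩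
    have harg : 2 * (d + 2 * j' + (m:ℤ) * n) + p + 2 * (m:ℤ) * (j' - n) =
        q + (2 * ((m:ℤ) + 2)) * j' := by linear_combination -hd
    have hcphi : c (φ (n, j')) = q := by
      simp only [hc, hφ]
      rw [harg, Int.add_mul_emod_self_left, Int.emod_eq_of_lt hq0 hqL]
    rw [if_pos hcphi]
    simp only [hT, hφ]
    have hkR : ((d + 2 * j' + (m:ℤ) * n : ℤ) : ℝ) = (d:ℝ) + 2 * j' + (m:ℝ) * n := by
      push_cast; ring
    have hjR : ((j' - n : ℤ) : ℝ) = (j':ℝ) - n := by push_cast; ring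
    have hqR : (q:ℝ) = (p:ℝ) + 2 * d := by rw [hd]; push_cast; ring
    have hE2 : ((d + 2 * j' + (m:ℤ) * n : ℤ) : ℝ) +
        (m:ℝ) * ((p:ℝ) / (2 * (m:ℝ)) + ((j' - n : ℤ) : ℝ)) =
        ((m:ℝ) + 2) * ((q:ℝ) / (2 * ((m:ℝ) + 2)) + (j':ℝ)) := by
      rw [hkR, hjR, hqR]; field_simp; ring
    have hE1 : ((d + 2 * j' + (m:ℤ) * n : ℤ) : ℝ) ^ 2 / 2 +
        (m:ℝ) * ((p:ℝ) / (2 * (m:ℝ)) + ((j' - n : ℤ) : ℝ)) ^ 2 =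
        alphaPQ (m:ℝ) p q n + ((m:ℝ) + 2) * ((q:ℝ) / (2 * ((m:ℝ) + 2)) + (j':ℝ)) ^ 2 := by
      simp only [alphaPQ]
      rw [hkR, hjR, hqR]
      field_simp
      ring
    have comb : ∀ a b cc dd : ℝ, (t ^ a * z ^ b) * (t ^ cc * z ^ dd) =
        t ^ (a + cc) * z ^ (b + dd) := by
      intro a b cc dd
      rw [Real.rpow_add ht0, Real.rpow_add hz]; ring
    rw [← Real.rpow_intCast z (d + 2 * j' + (m:ℤ) * n), comb, ← mul_assoc,
      ← Real.rpow_add ht0, hE1, hE2]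
  calc (∑' x : ℤ × ℤ, if c x = q then T x else 0)
      = ∑' y : ℤ × ℤ, (if c (φ y) = q then T (φ y) else 0) := (hinj.tsum_eq hsupp).symm
    _ = ∑' y : ℤ × ℤ, (t ^ alphaPQ (m : ℝ) p q y.1) *
        (t ^ (((m : ℝ) + 2) * ((q : ℝ) / (2 * ((m : ℝ) + 2)) + (y.2 : ℝ)) ^ 2) *
          z ^ (((m : ℝ) + 2) * ((q : ℝ) / (2 * ((m : ℝ) + 2)) + (y.2 : ℝ)))) :=
      tsum_congr hval
    _ = (∑' n : ℤ, t ^ alphaPQ (m : ℝ) p q n) * thetaNM q (m + 2) t z := by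
      rw [hth2 q]
      exact (tsum_mul_tsum_of_summable_norm (hS3n q) (hS4n q)).symm
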